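/- Let 𝔛 be a complete class of finite groups and G a finite group. Then k_𝔛(G) = 1 if and only if h_𝔛(G) = 1 and every 𝔛-maximal subgroup of G is a Hall 𝔛-subgroup of G. -/

import Mathlib

open scoped Pointwise

/-- A class of (finite) groups, given as a property of group types. -/
abbrev GroupClass : Type 1 := ∀ (G : Type) [Group G], Prop

/-- A complete class of finite groups: nonempty, closed under isomorphism,
subgroups, homomorphic images, and extensions. -/
def IsCompleteClass (X : GroupClass) : Prop :=
  (∃ (G : Type) (inst : Group G), Finite G ∧ @X G inst) ∧
  (∀ (G H : Type) [Group G] [Group H] [Finite G], (G ≃* H) → X G → X H) ∧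
  (∀ (G : Type) [Group G] [Finite G], X G → ∀ H : Subgroup G, X ↥H) ∧
  (∀ (G H : Type) [Group G] [Group H] [Finite G] (φ : G →* H),
      Function.Surjective φ → X G → X H) ∧
  (∀ (G : Type) [Group G] [Finite G] (N : Subgroup G) [N.Normal],
      X ↥N → X (G ⧸ N) → X G)

/-- The conjugate `g H g⁻¹` of a subgroup. -/
def conjSub {G : Type} [Group G] (g : G) (H : Subgroup G) : Subgroup G :=
  H.map (MulAut.conj g).toMonoidHom

/-- The number of conjugacy classes meeting a (conjugation-invariant) set of subgroups. -/
noncomputable def numClasses {G : Type} [Group G] (S : Set (Subgroup G)) : ℕ :=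
  Nat.card {C : Set (Subgroup G) // ∃ H ∈ S, C = {K | ∃ g : G, K = conjSub g H}}

/-- An `𝔛`-maximal subgroup: an `𝔛`-subgroup maximal under inclusion among
`𝔛`-subgroups. -/
def IsXMaximal (X : GroupClass) {G : Type} [Group G] (H : Subgroup G) : Prop :=
  X ↥H ∧ ∀ K : Subgroup G, X ↥K → H ≤ K → H = K

/-- `k_𝔛(G)`: the number of conjugacy classes of `𝔛`-maximal subgroups of `G`. -/
noncomputable def kX (X : GroupClass) (G : Type) [Group G] : ℕ :=
  numClasses {H : Subgroup G | IsXMaximal X H}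

/-- `π(𝔛)`: the set of primes dividing the order of some finite `𝔛`-group. -/
def piX (X : GroupClass) : Set ℕ :=
  {p | p.Prime ∧ ∃ (G : Type) (inst : Group G), Finite G ∧ @X G inst ∧ p ∣ Nat.card G}

/-- A Hall `𝔛`-subgroup: an `𝔛`-subgroup whose index is divisible by no prime
in `π(𝔛)`. -/
def IsHallX (X : GroupClass) {G : Type} [Group G] (H : Subgroup G) : Prop :=
  X ↥H ∧ ∀ p ∈ piX X, ¬ p ∣ H.index

/-- `h_𝔛(G)`: the number of conjugacy classes of Hall `𝔛`-subgroups of `G`. -/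
noncomputable def hX (X : GroupClass) (G : Type) [Group G] : ℕ :=
  numClasses {H : Subgroup G | IsHallX X H}

section Test
variable {G : Type} [Group G]

example (g x : G) : MulAut.conj g x = g * x * g⁻¹ := by simp

lemma mem_conjSub {g x : G} {H : Subgroup G} : x ∈ conjSub g H ↔ g⁻¹ * x * g ∈ H := by
  constructor
  · rintro ⟨y, hy, rfl⟩
    simpa [MulAut.conj_apply, mul_assoc] using hy
  · intro h
    refine ⟨g⁻¹ * x * g, h, ?_⟩
    simp [MulAut.conj_apply, mul_assoc]

lemma conjSub_conjSub (a b : G) (H : Subgroup G) :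
    conjSub a (conjSub b H) = conjSub (a * b) H := by
  ext x
  rw [mem_conjSub, mem_conjSub, mem_conjSub]
  have : b⁻¹ * (a⁻¹ * x * a) * b = (a * b)⁻¹ * x * (a * b) := by group
  rw [this]

lemma conjSub_one (H : Subgroup G) : conjSub 1 H = H := by
  ext x; rw [mem_conjSub]; simp

lemma conjSub_index [Finite G] (g : G) (H : Subgroup G) : (conjSub g H).index = H.index := by
  apply Subgroup.index_map_eq
  · exact (MulAut.conj g).surjective
  · rw [(MonoidHom.ker_eq_bot_iff ((MulAut.conj g).toMonoidHom)).mpr (MulAut.conj g).injective]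
    exact bot_le

end Test


section Classes
variable {G : Type} [Group G]

/-- conjugacy orbit of a subgroup -/
def orbitSub (H : Subgroup G) : Set (Subgroup G) := {K | ∃ g : G, K = conjSub g H}

lemma mem_orbitSub_self (H : Subgroup G) : H ∈ orbitSub H := ⟨1, (conjSub_one H).symm⟩

lemma orbitSub_conj (g : G) (H : Subgroup G) : orbitSub (conjSub g H) = orbitSub H := by
  ext K
  constructor
  · rintro ⟨a, rfl⟩; exact ⟨a * g, by rw [conjSub_conjSub]⟩
  · rintro ⟨a, rfl⟩
    exact ⟨a * g⁻¹, by rw [conjSub_conjSub, inv_mul_cancel_right]⟩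

lemma numClasses_eq_one_iff (S : Set (Subgroup G)) :
    numClasses S = 1 ↔ S.Nonempty ∧ ∀ H ∈ S, ∀ K ∈ S, ∃ g : G, K = conjSub g H := by
  rw [numClasses, Nat.card_eq_one_iff_unique]
  constructor
  · rintro ⟨hsub, ⟨C, H, hH, hC⟩⟩
    refine ⟨⟨H, hH⟩, fun H₁ h₁ K₁ k₁ => ?_⟩
    have e : (⟨orbitSub H₁, H₁, h₁, rfl⟩ : {C : Set (Subgroup G) //
        ∃ H ∈ S, C = {K | ∃ g : G, K = conjSub g H}}) = ⟨orbitSub K₁, K₁, k₁, rfl⟩ :=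
      hsub.allEq _ _
    have e' : orbitSub H₁ = orbitSub K₁ := congrArg Subtype.val e
    have : K₁ ∈ orbitSub H₁ := e' ▸ mem_orbitSub_self K₁
    exact this
  · rintro ⟨⟨H, hH⟩, hconj⟩
    constructor
    · constructor
      rintro ⟨C₁, H₁, h₁, rfl⟩ ⟨C₂, H₂, h₂, rfl⟩
      obtain ⟨g, rfl⟩ := hconj H₁ h₁ H₂ h₂
      exact Subtype.ext (orbitSub_conj g H₁).symm
    · exact ⟨⟨orbitSub H, H, hH, rfl⟩⟩

lemma numClasses_congr {S T : Set (Subgroup G)} (h : S = T) : numClasses S = numClasses T := by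
  rw [h]

end Classes


section Main

variable {X : GroupClass}

lemma mem_piX_of_dvd {p : ℕ} (hp : p.Prime) (K : Type) [Group K] [Finite K]
    (hK : X K) (h : p ∣ Nat.card K) : p ∈ piX X :=
  ⟨hp, K, ‹Group K›, ‹Finite K›, hK, h⟩

variable {G : Type} [Group G] [Finite G]

lemma isXMaximal_of_isHallX {H : Subgroup G} (hH : IsHallX X H) : IsXMaximal X H := by
  obtain ⟨hXH, hHall⟩ := hH
  refine ⟨hXH, fun K hK hle => ?_⟩
  have h1 : H.relIndex K ∣ H.index := Subgroup.relIndex_dvd_index_of_le hle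
  have h2 : H.relIndex K ∣ Nat.card K := Subgroup.index_dvd_card (H.subgroupOf K)
  have hrel : H.relIndex K = 1 := by
    by_contra hne
    obtain ⟨p, hp, hpd⟩ := Nat.exists_prime_and_dvd hne
    exact hHall p (mem_piX_of_dvd hp ↥K hK (hpd.trans h2)) (hpd.trans h1)
  exact le_antisymm hle (Subgroup.relIndex_eq_one.mp hrel)

lemma exists_xmax_ge {H : Subgroup G} (hH : X ↥H) :
    ∃ M : Subgroup G, IsXMaximal X M ∧ H ≤ M := by
  obtain ⟨M, hMs, hmax⟩ := Set.Finite.exists_maximalFor (fun K : Subgroup G => Nat.card K)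
    {K : Subgroup G | X ↥K ∧ H ≤ K} (Set.toFinite _) ⟨H, hH, le_rfl⟩
  refine ⟨M, ⟨hMs.1, fun K hK hle => ?_⟩, hMs.2⟩
  have hKmem : K ∈ {K : Subgroup G | X ↥K ∧ H ≤ K} := ⟨hK, hMs.2.trans hle⟩
  have hcard := hmax hKmem (Subgroup.card_le_of_le hle)
  exact Subgroup.eq_of_le_of_card_ge hle hcard

lemma X_of_subsingleton (hXc : IsCompleteClass X) (P : Type) [Group P] [Finite P]
    [Subsingleton P] : X P := by
  obtain ⟨G₀, inst₀, fin₀, h₀⟩ := hXc.1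
  have h1 : X ↥(⊥ : Subgroup G₀) := hXc.2.2.1 G₀ h₀ ⊥
  haveI : Subsingleton ↥(⊥ : Subgroup G₀) :=
    ⟨fun a b => Subtype.ext (by rw [Subgroup.mem_bot.mp a.2, Subgroup.mem_bot.mp b.2])⟩
  refine hXc.2.1 _ _ ?_ h1
  exact { toFun := fun _ => 1, invFun := fun _ => 1,
          left_inv := fun a => Subsingleton.elim _ _,
          right_inv := fun a => Subsingleton.elim _ _,
          map_mul' := fun a b => by simp }

lemma X_of_card_prime (hXc : IsCompleteClass X) {p : ℕ} (hp : p ∈ piX X) (P : Type)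
    [Group P] [Finite P] (hcard : Nat.card P = p) : X P := by
  obtain ⟨hpp, G₀, inst₀, fin₀, h₀, hdvd⟩ := hp
  haveI : Fact p.Prime := ⟨hpp⟩
  obtain ⟨x, hx⟩ := exists_prime_orderOf_dvd_card' (G := G₀) p hdvd
  have hc : Nat.card ↥(Subgroup.zpowers x) = p := by rw [Nat.card_zpowers, hx]
  have h1 : X ↥(Subgroup.zpowers x) := hXc.2.2.1 G₀ h₀ _
  exact hXc.2.1 _ _ (mulEquivOfPrimeCardEq hc hcard) h1

lemma X_of_pGroup (hXc : IsCompleteClass X) {p : ℕ} (hp : p ∈ piX X) :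
    ∀ (n : ℕ) (P : Type) [Group P] [Finite P], Nat.card P = n → IsPGroup p P → X P := by
  intro n
  induction n using Nat.strong_induction_on with
  | _ n ih =>
    intro P _ _ hcard hP
    rcases subsingleton_or_nontrivial P with hs | hn
    · exact X_of_subsingleton hXc P
    · haveI : Fact p.Prime := ⟨hp.1⟩
      haveI hcent : Nontrivial (Subgroup.center P) := hP.center_nontrivial
      obtain ⟨k, hk⟩ := IsPGroup.iff_card.mp (hP.to_subgroup (Subgroup.center P))
      have hk0 : k ≠ 0 := by
        rintro rfl
        rw [pow_zero] at hk
        rw [Nat.card_eq_one_iff_unique] at hk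
        exact not_subsingleton_iff_nontrivial.mpr hcent hk.1
      have hdvd : p ∣ Nat.card ↥(Subgroup.center P) := hk ▸ dvd_pow_self p hk0
      obtain ⟨z, hz⟩ := exists_prime_orderOf_dvd_card' (G := ↥(Subgroup.center P)) p hdvd
      set N := Subgroup.zpowers (z : P) with hNdef
      have hNle : N ≤ Subgroup.center P := Subgroup.zpowers_le.mpr z.2
      haveI : N.Normal := by
        constructor
        intro a ha g
        have hcom := Subgroup.mem_center_iff.mp (hNle ha) g
        rw [hcom, mul_inv_cancel_right]
        exact ha
      have hcardN : Nat.card ↥N = p := by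
        rw [hNdef, Nat.card_zpowers, Subgroup.orderOf_coe, hz]
      have hXN : X ↥N := X_of_card_prime hXc ⟨hp.1, hp.2⟩ ↥N hcardN
      have hQ : IsPGroup p (P ⧸ N) := hP.to_quotient N
      have hlt : Nat.card (P ⧸ N) < n := by
        have hmul := Subgroup.card_eq_card_quotient_mul_card_subgroup N
        rw [hcard, hcardN] at hmul
        have hq0 : 0 < Nat.card (P ⧸ N) := Nat.card_pos
        calc Nat.card (P ⧸ N) < Nat.card (P ⧸ N) * p := by
              nlinarith [hp.1.two_le]
          _ = n := hmul.symm
      exact hXc.2.2.2.2 P N hXN (ih _ hlt (P ⧸ N) rfl hQ)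

end Main


section Final
variable {X : GroupClass} {G : Type} [Group G] [Finite G]

lemma isHallX_of_kX_one (hXc : IsCompleteClass X) (hk : kX X G = 1) {H : Subgroup G}
    (hH : IsXMaximal X H) : IsHallX X H := by
  refine ⟨hH.1, fun p hp hdvd => ?_⟩
  haveI : Fact p.Prime := ⟨hp.1⟩
  obtain ⟨P⟩ := (Sylow.nonempty : Nonempty (Sylow p G))
  have hXP : X ↥((P : Subgroup G)) := X_of_pGroup hXc hp _ ↥(P : Subgroup G) rfl P.2
  obtain ⟨M, hM, hPM⟩ := exists_xmax_ge hXP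
  rw [kX, numClasses_eq_one_iff] at hk
  obtain ⟨g, hg⟩ := hk.2 M hM H hH
  have hidx : H.index = M.index := by rw [hg, conjSub_index]
  have hPdvd : p ∣ (P : Subgroup G).index :=
    (hidx ▸ hdvd).trans (Subgroup.index_dvd_of_le hPM)
  exact P.not_dvd_index hPdvd

theorem kX_eq_one_iff_hX_eq_one_and_max_eq_hall' (hXc : IsCompleteClass X) :
    kX X G = 1 ↔
      (hX X G = 1 ∧ ∀ H : Subgroup G, IsXMaximal X H → IsHallX X H) := by
  constructor
  · intro hk
    have hmax : ∀ H : Subgroup G, IsXMaximal X H → IsHallX X H :=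
      fun H hH => isHallX_of_kX_one hXc hk hH
    have hsets : {H : Subgroup G | IsHallX X H} = {H : Subgroup G | IsXMaximal X H} :=
      Set.ext fun H => ⟨fun h => isXMaximal_of_isHallX h, fun h => hmax H h⟩
    refine ⟨?_, hmax⟩
    rw [hX, hsets]
    exact hk
  · rintro ⟨hh, hmax⟩
    have hsets : {H : Subgroup G | IsHallX X H} = {H : Subgroup G | IsXMaximal X H} :=
      Set.ext fun H => ⟨fun h => isXMaximal_of_isHallX h, fun h => hmax H h⟩
    rw [kX, ← hsets]
    exact hh

end Final


/-- `k_𝔛(G) = 1` iff ... -/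
theorem kX_eq_one_iff_hX_eq_one_and_max_eq_hall (X : GroupClass) (hXc : IsCompleteClass X)
    (G : Type) [Group G] [Finite G] :
    kX X G = 1 ↔
      (hX X G = 1 ∧ ∀ H : Subgroup G, IsXMaximal X H → IsHallX X H) := by
  exact kX_eq_one_iff_hX_eq_one_and_max_eq_hall' hXc
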